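/- (Proposition 1) Let a ∈ ℝ and let α₀ > 0, α₁ > 0, α₂ > 0, α₃ > 0 be given. Then there exist real numbers b > a, A > 0, B > 0, a point ζ > b, and a function u : [a,∞) → ℝ which is three times continuously differentiable on [a,∞), four times differentiable on (a,b) ∪ (b,∞), such that u''''(x) = −A·u(x) for all x ∈ (a,b), u''''(x) = B·u(x) for all x ∈ (b,∞), u(a) = α₀, u'(a) = α₁, u''(a) = α₂, u'''(a) = α₃, and u'(ζ) = u'''(ζ) = 0. -/

import Mathlib

open Real Set

set_option maxHeartbeats 1600000


noncomputable def Fb (x0 K L c d : ℝ) : ℝ → ℝ :=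
  fun x => Real.exp (K*(x-x0)) * (c * Real.cos (L*(x-x0)) + d * Real.sin (L*(x-x0)))

lemma Fb_hasDerivAt (x0 K L c d : ℝ) {A B : ℝ} (hA : A = K*c+L*d) (hB : B = K*d-L*c) (x : ℝ) :
    HasDerivAt (Fb x0 K L c d) (Fb x0 K L A B x) x := by
  subst hA hB
  unfold Fb
  have h1 : HasDerivAt (fun x => K*(x-x0)) K x := by
    simpa using ((hasDerivAt_id x).sub_const x0).const_mul K
  have h2 : HasDerivAt (fun x => L*(x-x0)) L x := by
    simpa using ((hasDerivAt_id x).sub_const x0).const_mul L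
  have he : HasDerivAt (fun x => Real.exp (K*(x-x0))) (Real.exp (K*(x-x0)) * K) x :=
    (Real.hasDerivAt_exp _).comp x h1
  have hc : HasDerivAt (fun x => Real.cos (L*(x-x0))) (-Real.sin (L*(x-x0)) * L) x :=
    (Real.hasDerivAt_cos _).comp x h2
  have hs : HasDerivAt (fun x => Real.sin (L*(x-x0))) (Real.cos (L*(x-x0)) * L) x :=
    (Real.hasDerivAt_sin _).comp x h2
  have := he.mul (((hc.const_mul c)).add ((hs.const_mul d)))
  refine this.congr_deriv ?_
  simp only [Pi.add_apply]
  ring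

lemma Fb_cont (x0 K L c d : ℝ) : Continuous (Fb x0 K L c d) := by
  unfold Fb; fun_prop

@[simp] lemma Fb_self (x0 K L c d : ℝ) : Fb x0 K L c d x0 = c := by
  simp [Fb]

noncomputable def Gb (x0 m P Q R S : ℝ) : ℝ → ℝ :=
  fun x => P * Real.cosh (m*(x-x0)) + Q * Real.sinh (m*(x-x0))
    + R * Real.cos (m*(x-x0)) + S * Real.sin (m*(x-x0))

lemma Gb_hasDerivAt (x0 m P Q R S : ℝ) {A B C D : ℝ}
    (hA : A = m*Q) (hB : B = m*P) (hC : C = m*S) (hD : D = -(m*R)) (x : ℝ) :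
    HasDerivAt (Gb x0 m P Q R S) (Gb x0 m A B C D x) x := by
  subst hA hB hC hD
  unfold Gb
  have h2 : HasDerivAt (fun x => m*(x-x0)) m x := by
    simpa using ((hasDerivAt_id x).sub_const x0).const_mul m
  have hch : HasDerivAt (fun x => Real.cosh (m*(x-x0))) (Real.sinh (m*(x-x0)) * m) x :=
    (Real.hasDerivAt_cosh _).comp x h2
  have hsh : HasDerivAt (fun x => Real.sinh (m*(x-x0))) (Real.cosh (m*(x-x0)) * m) x :=
    (Real.hasDerivAt_sinh _).comp x h2
  have hc : HasDerivAt (fun x => Real.cos (m*(x-x0))) (-Real.sin (m*(x-x0)) * m) x :=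
    (Real.hasDerivAt_cos _).comp x h2
  have hs : HasDerivAt (fun x => Real.sin (m*(x-x0))) (Real.cos (m*(x-x0)) * m) x :=
    (Real.hasDerivAt_sin _).comp x h2
  have := (((hch.const_mul P).add (hsh.const_mul Q)).add (hc.const_mul R)).add (hs.const_mul S)
  refine this.congr_deriv ?_
  ring

lemma Gb_cont (x0 m P Q R S : ℝ) : Continuous (Gb x0 m P Q R S) := by
  unfold Gb; fun_prop

@[simp] lemma Gb_self (x0 m P Q R S : ℝ) : Gb x0 m P Q R S x0 = P + R := by
  simp [Gb]

/-- gluing lemma -/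
lemma piecewise_hasDerivAt {b : ℝ} {f g f' g' : ℝ → ℝ}
    (hf : ∀ x, HasDerivAt f (f' x) x) (hg : ∀ x, HasDerivAt g (g' x) x)
    (h0 : f b = g b) (h1 : f' b = g' b) (x : ℝ) :
    HasDerivAt (fun y => if b ≤ y then g y else f y)
      (if b ≤ x then g' x else f' x) x := by
  rcases lt_trichotomy x b with hx | hx | hx
  · rw [if_neg (not_le.2 hx)]
    apply (hf x).congr_of_eventuallyEq
    filter_upwards [Iio_mem_nhds hx] with y hy
    rw [if_neg (not_le.2 hy)]
  · subst hx
    rw [if_pos le_rfl]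
    have hle : HasDerivWithinAt (fun y => if x ≤ y then g y else f y) (g' x) (Iic x) x := by
      rw [← h1]
      apply (hf x).hasDerivWithinAt.congr
      · intro y hy
        rcases eq_or_lt_of_le (mem_Iic.1 hy) with h | h
        · rw [h]; simp [h0]
        · rw [if_neg (not_le.2 h)]
      · simp [h0]
    have hge : HasDerivWithinAt (fun y => if x ≤ y then g y else f y) (g' x) (Ici x) x := by
      apply (hg x).hasDerivWithinAt.congr
      · intro y hy
        rw [if_pos (mem_Ici.1 hy)]
      · rw [if_pos le_rfl]
    have := hle.union hge
    rw [Iic_union_Ici] at this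
    exact this.hasDerivAt (by simp)
  · rw [if_pos hx.le]
    apply (hg x).congr_of_eventuallyEq
    filter_upwards [Ioi_mem_nhds hx] with y hy
    rw [if_pos (le_of_lt hy)]


lemma hyp_id {p q r s μ X : ℝ} (hμ : μ ≠ 0) (hX : 0 < X)
    (hE2 : X^2 * (μ*(p*μ^2+r) + (q*μ^2+s)) = μ*(p*μ^2+r) - (q*μ^2+s)) :
    ((p + r/μ^2)/2) * ((X - X⁻¹)/2) + ((q*μ^2+s)/(2*μ^3)) * ((X + X⁻¹)/2) = 0 := by
  have hXne : X ≠ 0 := hX.ne'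
  have expand : ((p + r/μ^2)/2) * ((X - X⁻¹)/2) + ((q*μ^2+s)/(2*μ^3)) * ((X + X⁻¹)/2)
      = (X^2 * (μ*(p*μ^2+r) + (q*μ^2+s)) - (μ*(p*μ^2+r) - (q*μ^2+s))) / (4*μ^3*X) := by
    field_simp
    ring
  rw [expand, hE2, sub_self, zero_div]

/-- Stage 2: from a state (p,q,r,s) with sign pattern (+,-,-,-), find μ > 0 and θ > 0
such that the corresponding solution of u'''' = μ⁴ u has u' = u''' = 0 at time θ/μ. -/
lemma stage2 {p q r s : ℝ} (hp : 0 < p) (hq : q < 0) (hr : r < 0) (hs : s < 0) :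
    ∃ μ θ : ℝ, 0 < μ ∧ 0 < θ ∧
      ((p + r/μ^2)/2) * Real.sinh θ + ((q*μ^2+s)/(2*μ^3)) * Real.cosh θ = 0 ∧
      ((p - r/μ^2)/2) * Real.sin θ - ((q*μ^2-s)/(2*μ^3)) * Real.cos θ = 0 := by
  classical
  set N : ℝ → ℝ := fun μ => -(q*μ^2+s) with hN
  set D : ℝ → ℝ := fun μ => μ*(p*μ^2+r) with hD
  have hNpos : ∀ μ, 0 < N μ := fun μ => by
    have : q*μ^2 ≤ 0 := mul_nonpos_of_nonpos_of_nonneg hq.le (sq_nonneg μ)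
    simp only [hN]; nlinarith
  have hNcont : Continuous N := by simp only [hN]; fun_prop
  have hDcont : Continuous D := by simp only [hD]; fun_prop
  -- choose μhi with D μhi ≥ 2 N μhi
  obtain ⟨μhi, hμhi1, hμhi2⟩ : ∃ μ : ℝ, 1 ≤ μ ∧ 2 * N μ ≤ D μ := by
    refine ⟨max 1 ((-r + 2*(-q) + 2*(-s))/p + 1), le_max_left _ _, ?_⟩
    set μ := max 1 ((-r + 2*(-q) + 2*(-s))/p + 1) with hμ
    have h1 : 1 ≤ μ := le_max_left _ _
    have h2 : (-r + 2*(-q) + 2*(-s))/p + 1 ≤ μ := le_max_right _ _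
    have h3 : -r + 2*(-q) + 2*(-s) ≤ p * μ := by
      rw [div_add' _ _ _ hp.ne'] at h2
      have := (div_le_iff₀ hp).1 h2
      nlinarith
    have hμ0 : 0 < μ := lt_of_lt_of_le one_pos h1
    have h4 : (-r + 2*(-q) + 2*(-s)) * μ^2 ≤ (p * μ) * μ^2 :=
      mul_le_mul_of_nonneg_right h3 (sq_nonneg μ)
    have h5 : 0 ≤ (-s) * (μ^2 - 1) := by nlinarith [sq_nonneg (μ-1)]
    have h6 : 0 ≤ (-r) * (μ^2 - μ) :=
      mul_nonneg (by linarith) (by nlinarith [mul_nonneg hμ0.le (sub_nonneg.2 h1)])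
    simp only [hN, hD]
    nlinarith
  have hDhi : 0 < D μhi := lt_of_lt_of_le (by nlinarith [hNpos μhi]) hμhi2
  -- the sup of the "bad" set
  set K : Set ℝ := Icc 0 μhi ∩ {μ | D μ - N μ ≤ 0} with hK
  have hK0 : (0:ℝ) ∈ K := by
    constructor
    · exact ⟨le_rfl, by positivity⟩
    · show D 0 - N 0 ≤ 0
      simp only [hD, hN]; nlinarith
  have hKclosed : IsClosed K :=
    isClosed_Icc.inter (isClosed_le (hDcont.sub hNcont) continuous_const)
  have hKbdd : BddAbove K := ⟨μhi, fun μ hμ => hμ.1.2⟩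
  set μbar := sSup K with hμbar
  have hμbarK : μbar ∈ K := hKclosed.csSup_mem ⟨0, hK0⟩ hKbdd
  have hμbar0 : 0 ≤ μbar := hμbarK.1.1
  have hμbarlt : μbar < μhi := by
    rcases lt_or_eq_of_le hμbarK.1.2 with h | h
    · exact h
    · exfalso; have := hμbarK.2; rw [h] at this
      have : D μhi - N μhi ≤ 0 := this
      nlinarith [hNpos μhi]
  have hgood : ∀ μ, μbar < μ → μ ≤ μhi → 0 < D μ - N μ := by
    intro μ h1 h2
    by_contra h
    push_neg at h
    have : μ ∈ K := ⟨⟨le_trans hμbar0 h1.le, h2⟩, h⟩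
    exact absurd (le_csSup hKbdd this) (not_le.2 h1)
  -- find μlo just above μbar where (D+N) > exp(3π) (D-N)
  obtain ⟨μlo, hμlo1, hμlo2, hμlo3⟩ :
      ∃ μ, μbar < μ ∧ μ < μhi ∧ Real.exp (3*Real.pi) * (D μ - N μ) < D μ + N μ := by
    set g : ℝ → ℝ := fun μ => (D μ + N μ) - Real.exp (3*Real.pi) * (D μ - N μ) with hg
    have hgcont : Continuous g := by
      simp only [hg]; exact (hDcont.add hNcont).sub (continuous_const.mul (hDcont.sub hNcont))
    have hgbar : 0 < g μbar := by
      have h1 : D μbar - N μbar ≤ 0 := hμbarK.2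
      have e1 : (1:ℝ) ≤ Real.exp (3*Real.pi) := by
        rw [show (1:ℝ) = Real.exp 0 by simp]
        exact Real.exp_le_exp.2 (by positivity)
      have h2 := mul_nonneg (sub_nonneg.2 e1) (neg_nonneg.2 h1)
      have := hNpos μbar
      simp only [hg]; nlinarith
    have hev1 : ∀ᶠ μ in nhdsWithin μbar (Ioi μbar), 0 < g μ :=
      nhdsWithin_le_nhds (continuousAt_const.eventually_lt hgcont.continuousAt hgbar)
    have hev2 : ∀ᶠ μ in nhdsWithin μbar (Ioi μbar), μ < μhi :=
      nhdsWithin_le_nhds (eventually_lt_nhds hμbarlt)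
    have hev3 : ∀ᶠ μ in nhdsWithin μbar (Ioi μbar), μbar < μ :=
      eventually_mem_nhdsWithin
    obtain ⟨μ, h1, h3⟩ := ((hev1.and hev2).and hev3).exists
    exact ⟨μ, h3, h1.2, by have := h1.1; simp only [hg] at this; linarith⟩
  have hμlo0 : 0 < μlo := lt_of_le_of_lt hμbar0 hμlo1
  -- θ function
  set θf : ℝ → ℝ := fun μ => Real.log ((D μ + N μ)/(D μ - N μ)) / 2 with hθf
  have hIccfacts : ∀ μ ∈ Icc μlo μhi, 0 < D μ - N μ ∧ 0 < D μ + N μ ∧ 0 < μ := by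
    intro μ hμ
    have h1 : 0 < D μ - N μ := hgood μ (lt_of_lt_of_le hμlo1 hμ.1) hμ.2
    exact ⟨h1, by nlinarith [hNpos μ], lt_of_lt_of_le hμlo0 hμ.1⟩
  have hθcont : ContinuousOn θf (Icc μlo μhi) := by
    apply ContinuousOn.div_const
    apply ContinuousOn.log
    · exact (hDcont.continuousOn.add hNcont.continuousOn).div
        (hDcont.continuousOn.sub hNcont.continuousOn)
        (fun μ hμ => (hIccfacts μ hμ).1.ne')
    · intro μ hμ
      exact (div_pos (hIccfacts μ hμ).2.1 (hIccfacts μ hμ).1).ne'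
  have hratio_gt1 : ∀ μ ∈ Icc μlo μhi, 1 < (D μ + N μ)/(D μ - N μ) := by
    intro μ hμ
    obtain ⟨h1, h2, h3⟩ := hIccfacts μ hμ
    rw [lt_div_iff₀ h1]
    nlinarith [hNpos μ]
  have hθpos : ∀ μ ∈ Icc μlo μhi, 0 < θf μ := by
    intro μ hμ
    have := Real.log_pos (hratio_gt1 μ hμ)
    simp only [hθf]; linarith
  have hexpθ : ∀ μ ∈ Icc μlo μhi, Real.exp (2 * θf μ) = (D μ + N μ)/(D μ - N μ) := by
    intro μ hμ
    have h := (div_pos (hIccfacts μ hμ).2.1 (hIccfacts μ hμ).1)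
    simp only [hθf]
    rw [show 2 * (Real.log ((D μ + N μ)/(D μ - N μ)) / 2)
        = Real.log ((D μ + N μ)/(D μ - N μ)) by ring]
    exact Real.exp_log h
  have hμloIcc : μlo ∈ Icc μlo μhi := ⟨le_rfl, hμlo2.le⟩
  have hμhiIcc : μhi ∈ Icc μlo μhi := ⟨hμlo2.le, le_rfl⟩
  -- θ at the endpoints
  have hθlo : 3*Real.pi/2 ≤ θf μlo := by
    have h1 : 0 < D μlo - N μlo := (hIccfacts μlo hμloIcc).1
    have h2 : Real.exp (3*Real.pi) ≤ (D μlo + N μlo)/(D μlo - N μlo) := by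
      rw [le_div_iff₀ h1]; linarith [hμlo3]
    have h3 := Real.log_le_log (Real.exp_pos _) h2
    rw [Real.log_exp] at h3
    simp only [hθf]; linarith
  have hθhi : θf μhi ≤ 1 := by
    have h1 : 0 < D μhi - N μhi := (hIccfacts μhi hμhiIcc).1
    have h2 : (D μhi + N μhi)/(D μhi - N μhi) ≤ 3 := by
      rw [div_le_iff₀ h1]; nlinarith [hNpos μhi, hμhi2]
    have h3 : Real.log ((D μhi + N μhi)/(D μhi - N μhi)) ≤ Real.log 3 :=
      Real.log_le_log (div_pos (hIccfacts μhi hμhiIcc).2.1 h1) h2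
    have h4 : Real.log 3 ≤ 2 := by
      have h5 : (3:ℝ) ≤ Real.exp 2 := by linarith [Real.add_one_le_exp (2:ℝ)]
      have := Real.log_le_log (by norm_num) h5
      rwa [Real.log_exp] at this
    simp only [hθf]; linarith
  have hπ3 : (3:ℝ) < Real.pi := Real.pi_gt_three
  -- IVT for θf : get ν₁ with θf ν₁ = 3π/2 and ν₂ with θf ν₂ = π/2
  have hsub := intermediate_value_Icc' hμlo2.le hθcont
  obtain ⟨ν₁, hν₁mem, hν₁⟩ := hsub (show 3*Real.pi/2 ∈ Icc (θf μhi) (θf μlo) from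
    ⟨by linarith, by linarith⟩)
  obtain ⟨ν₂, hν₂mem, hν₂⟩ := hsub (show Real.pi/2 ∈ Icc (θf μhi) (θf μlo) from
    ⟨by linarith, by linarith⟩)
  -- the trigonometric function G
  set Gf : ℝ → ℝ := fun μ =>
    ((p - r/μ^2)/2) * Real.sin (θf μ) - ((q*μ^2-s)/(2*μ^3)) * Real.cos (θf μ) with hGf
  have hGcont : ContinuousOn Gf (Icc μlo μhi) := by
    apply ContinuousOn.sub
    · apply ContinuousOn.mul
      · apply ContinuousOn.div_const
        apply ContinuousOn.sub continuousOn_const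
        exact continuousOn_const.div (by fun_prop) (fun μ hμ => by
          have := (hIccfacts μ hμ).2.2; positivity)
      · exact Real.continuous_sin.comp_continuousOn hθcont
    · apply ContinuousOn.mul
      · exact (by fun_prop : ContinuousOn (fun μ : ℝ => q*μ^2-s) _).div (by fun_prop)
          (fun μ hμ => by have := (hIccfacts μ hμ).2.2; positivity)
      · exact Real.continuous_cos.comp_continuousOn hθcont
  have hsin32 : Real.sin (3*Real.pi/2) = -1 := by
    rw [show 3*Real.pi/2 = Real.pi + Real.pi/2 by ring, Real.sin_add]; simp
  have hcos32 : Real.cos (3*Real.pi/2) = 0 := by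
    rw [show 3*Real.pi/2 = Real.pi + Real.pi/2 by ring, Real.cos_add]; simp
  have hc3pos : ∀ μ ∈ Icc μlo μhi, 0 < (p - r/μ^2)/2 := by
    intro μ hμ
    have hμ0 := (hIccfacts μ hμ).2.2
    have hrq : r/μ^2 < 0 := div_neg_of_neg_of_pos hr (by positivity)
    linarith
  have hGν₁ : Gf ν₁ < 0 := by
    simp only [hGf, hν₁, hsin32, hcos32]
    have := hc3pos ν₁ hν₁mem
    nlinarith
  have hGν₂ : 0 < Gf ν₂ := by
    simp only [hGf, hν₂, Real.sin_pi_div_two, Real.cos_pi_div_two]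
    have := hc3pos ν₂ hν₂mem
    nlinarith
  -- IVT for G
  have hGsub := intermediate_value_uIcc (hGcont.mono (uIcc_subset_Icc hν₁mem hν₂mem))
  obtain ⟨μst, hμstmem, hμst⟩ := hGsub (show (0:ℝ) ∈ uIcc (Gf ν₁) (Gf ν₂) from
    mem_uIcc.2 (Or.inl ⟨hGν₁.le, hGν₂.le⟩))
  have hμstIcc : μst ∈ Icc μlo μhi := uIcc_subset_Icc hν₁mem hν₂mem hμstmem
  obtain ⟨hDN1, hDN2, hμst0⟩ := hIccfacts μst hμstIcc
  refine ⟨μst, θf μst, hμst0, hθpos μst hμstIcc, ?_, ?_⟩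
  · -- hyperbolic identity
    have hE2 : (Real.exp (θf μst))^2 = (D μst + N μst)/(D μst - N μst) := by
      rw [sq, ← Real.exp_add, show θf μst + θf μst = 2 * θf μst by ring]
      exact hexpθ μst hμstIcc
    rw [eq_div_iff hDN1.ne'] at hE2
    simp only [hD, hN] at hE2
    have hE2' : (Real.exp (θf μst))^2 * (μst*(p*μst^2+r) + (q*μst^2+s))
        = μst*(p*μst^2+r) - (q*μst^2+s) := by linear_combination hE2
    rw [Real.sinh_eq, Real.cosh_eq, Real.exp_neg]
    exact hyp_id hμst0.ne' (Real.exp_pos _) hE2'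
  · -- trigonometric identity
    simp only [hGf] at hμst
    exact hμst


/-- numeric sign facts for the left solution at the matching point -/
lemma signs {α₀ c d c' d' σ κ E : ℝ} (h₀ : 0 < α₀)
    (hc1 : α₀/2 - α₀/256 ≤ c) (hc2 : c ≤ α₀/2 + α₀/256)
    (hd1 : -(α₀/256) ≤ d) (hd2 : d ≤ α₀/256)
    (hc1' : α₀/2 - α₀/256 ≤ c') (hc2' : c' ≤ α₀/2 + α₀/256)
    (hd1' : -(α₀/256) ≤ d') (hd2' : d' ≤ α₀/256)
    (hσ1 : 1/4 ≤ σ) (hσ2 : σ ≤ 2/5) (hκ1 : 7/10 ≤ κ) (hκ2 : κ ≤ 1)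
    (hE : 8 ≤ E) :
    0 < E*(c*σ + d*κ) + E⁻¹*(c'*σ + d'*κ) ∧
    E*((c+d)*σ + (d-c)*κ) + E⁻¹*((d'-c')*σ - (c'+d')*κ) < 0 ∧
    E*(2*d*σ - 2*c*κ) + E⁻¹*(-(2*d')*σ + 2*c'*κ) < 0 ∧
    E*(2*(d-c)*σ - 2*(c+d)*κ) + E⁻¹*(2*(c'+d')*σ + 2*(d'-c')*κ) < 0 := by
  have hE0 : (0:ℝ) < E := by linarith
  have hEi0 : (0:ℝ) < E⁻¹ := by positivity
  have hEi : E⁻¹ ≤ 1/8 := by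
    rw [inv_le_comm₀ hE0 (by norm_num)]
    linarith
  have hσ0 : (0:ℝ) < σ := by linarith
  have hκ0 : (0:ℝ) < κ := by linarith
  -- bounds on the decaying-part inner sums: each is within [-3α₀, 3α₀]
  have habs0 : -(3*α₀) ≤ c'*σ + d'*κ ∧ c'*σ + d'*κ ≤ 3*α₀ := by
    constructor <;> nlinarith [mul_le_mul_of_nonneg_right hc2' hσ0.le,
      mul_le_mul_of_nonneg_right hc1' hσ0.le, mul_le_mul_of_nonneg_right hd2' hκ0.le,
      mul_le_mul_of_nonneg_right hd1' hκ0.le]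
  have habs1 : -(3*α₀) ≤ (d'-c')*σ - (c'+d')*κ ∧ (d'-c')*σ - (c'+d')*κ ≤ 3*α₀ := by
    constructor <;> nlinarith [mul_le_mul_of_nonneg_right hc2' hσ0.le,
      mul_le_mul_of_nonneg_right hc1' hσ0.le, mul_le_mul_of_nonneg_right hd2' hκ0.le,
      mul_le_mul_of_nonneg_right hd1' hκ0.le, mul_le_mul_of_nonneg_right hc2' hκ0.le,
      mul_le_mul_of_nonneg_right hc1' hκ0.le, mul_le_mul_of_nonneg_right hd2' hσ0.le,
      mul_le_mul_of_nonneg_right hd1' hσ0.le]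
  have habs2 : -(3*α₀) ≤ -(2*d')*σ + 2*c'*κ ∧ -(2*d')*σ + 2*c'*κ ≤ 3*α₀ := by
    constructor <;> nlinarith [mul_le_mul_of_nonneg_right hc2' hκ0.le,
      mul_le_mul_of_nonneg_right hc1' hκ0.le, mul_le_mul_of_nonneg_right hd2' hσ0.le,
      mul_le_mul_of_nonneg_right hd1' hσ0.le]
  have habs3 : -(3*α₀) ≤ 2*(c'+d')*σ + 2*(d'-c')*κ ∧ 2*(c'+d')*σ + 2*(d'-c')*κ ≤ 3*α₀ := by
    constructor <;> nlinarith [mul_le_mul_of_nonneg_right hc2' hσ0.le,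
      mul_le_mul_of_nonneg_right hc1' hσ0.le, mul_le_mul_of_nonneg_right hd2' hκ0.le,
      mul_le_mul_of_nonneg_right hd1' hκ0.le, mul_le_mul_of_nonneg_right hc2' hκ0.le,
      mul_le_mul_of_nonneg_right hc1' hκ0.le, mul_le_mul_of_nonneg_right hd2' hσ0.le,
      mul_le_mul_of_nonneg_right hd1' hσ0.le]
  -- growing-part inner sums have margin α₀/16
  have hM0 : α₀/16 ≤ c*σ + d*κ := by
    nlinarith [mul_le_mul_of_nonneg_right hc1 hσ0.le, mul_le_mul_of_nonneg_right hd1 hκ0.le,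
      mul_le_mul_of_nonneg_right hσ1 (show (0:ℝ) ≤ c by linarith),
      mul_le_mul_of_nonneg_right hκ2 (show (0:ℝ) ≤ α₀/256 - d by linarith)]
  have hM1 : (c+d)*σ + (d-c)*κ ≤ -(α₀/16) := by
    nlinarith [mul_le_mul_of_nonneg_right hσ2 (show (0:ℝ) ≤ c+d by linarith),
      mul_le_mul_of_nonneg_right hκ1 (show (0:ℝ) ≤ c-d by linarith),
      mul_le_mul_of_nonneg_right (show c+d ≤ α₀/2 + α₀/128 by linarith) hσ0.le,
      mul_le_mul_of_nonneg_right (show α₀/2 - α₀/128 ≤ c-d by linarith) hκ0.le]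
  have hM2 : 2*d*σ - 2*c*κ ≤ -(α₀/16) := by
    nlinarith [mul_le_mul_of_nonneg_right hd2 hσ0.le,
      mul_le_mul_of_nonneg_right hκ1 (show (0:ℝ) ≤ c by linarith),
      mul_le_mul_of_nonneg_right hc1 hκ0.le]
  have hM3 : 2*(d-c)*σ - 2*(c+d)*κ ≤ -(α₀/16) := by
    nlinarith [mul_le_mul_of_nonneg_right hσ1 (show (0:ℝ) ≤ c-d by linarith),
      mul_le_mul_of_nonneg_right hκ0.le (show (0:ℝ) ≤ c+d by linarith)]
  -- assemble
  have key : ∀ M M' : ℝ, α₀/16 ≤ M → -(3*α₀) ≤ M' → 0 < E*M + E⁻¹*M' := by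
    intro M M' h1 h2
    have g1 : E*(α₀/16) ≤ E*M := mul_le_mul_of_nonneg_left h1 hE0.le
    have g2 : 8*(α₀/16) ≤ E*(α₀/16) := mul_le_mul_of_nonneg_right hE (by positivity)
    have g3 : E⁻¹*(-(3*α₀)) ≤ E⁻¹*M' := mul_le_mul_of_nonneg_left h2 hEi0.le
    have g4 : -(E⁻¹*(3*α₀)) = E⁻¹*(-(3*α₀)) := by ring
    have g5 : E⁻¹*(3*α₀) ≤ (1/8)*(3*α₀) := mul_le_mul_of_nonneg_right hEi (by positivity)
    nlinarith
  have key' : ∀ M M' : ℝ, M ≤ -(α₀/16) → M' ≤ 3*α₀ → E*M + E⁻¹*M' < 0 := by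
    intro M M' h1 h2
    have := key (-M) (-M') (by linarith) (by linarith)
    nlinarith
  exact ⟨key _ _ hM0 habs0.1, key' _ _ hM1 habs1.2, key' _ _ hM2 habs2.2,
    key' _ _ hM3 habs3.2⟩


lemma sigma_kappa_bounds :
    1/4 ≤ Real.cos (3*Real.pi/8) ∧ Real.cos (3*Real.pi/8) ≤ 2/5 ∧
    7/10 ≤ Real.sin (3*Real.pi/8) ∧ Real.sin (3*Real.pi/8) ≤ 1 := by
  have hπ := Real.pi_gt_three
  have hπ' := Real.pi_lt_d2
  have hπ0 := Real.pi_pos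
  have hs8 : Real.sin (Real.pi/8) = Real.cos (3*Real.pi/8) := by
    rw [show 3*Real.pi/8 = Real.pi/2 - Real.pi/8 by ring, Real.cos_pi_div_two_sub]
  have hc8 : Real.cos (Real.pi/8) = Real.sin (3*Real.pi/8) := by
    rw [show 3*Real.pi/8 = Real.pi/2 - Real.pi/8 by ring, Real.sin_pi_div_two_sub]
  have sq2 : (Real.sqrt 2)^2 = 2 := Real.sq_sqrt (by norm_num)
  have sqrt2nn : 0 ≤ Real.sqrt 2 := Real.sqrt_nonneg 2
  have sqrt2lb : 1.4 ≤ Real.sqrt 2 := by nlinarith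
  have sqrt2ub : Real.sqrt 2 ≤ 1.5 := by nlinarith
  have hcos4 : Real.cos (Real.pi/4) = Real.sqrt 2/2 := Real.cos_pi_div_four
  have hdouble : Real.cos (Real.pi/4) = 2 * (Real.cos (Real.pi/8))^2 - 1 := by
    rw [show Real.pi/4 = 2*(Real.pi/8) by ring]; exact Real.cos_two_mul _
  have hpyth := Real.sin_sq_add_cos_sq (Real.pi/8)
  have hsin8nn : 0 ≤ Real.sin (Real.pi/8) :=
    Real.sin_nonneg_of_nonneg_of_le_pi (by positivity) (by linarith)
  have hcos8nn : 0 ≤ Real.cos (Real.pi/8) :=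
    Real.cos_nonneg_of_mem_Icc ⟨by linarith, by linarith⟩
  have hκsq : (Real.cos (Real.pi/8))^2 = (2 + Real.sqrt 2)/4 := by nlinarith
  have hσsq : (Real.sin (Real.pi/8))^2 = (2 - Real.sqrt 2)/4 := by nlinarith
  refine ⟨?_, ?_, ?_, Real.sin_le_one _⟩
  · rw [← hs8]; nlinarith
  · rw [← hs8]
    have := Real.sin_lt (show 0 < Real.pi/8 by positivity)
    linarith
  · rw [← hc8]; nlinarith

lemma exp_T_bound : 8 ≤ Real.exp (3*Real.pi/8 + 2*Real.pi) := by
  have := Real.add_one_le_exp (3*Real.pi/8 + 2*Real.pi)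
  have hπ := Real.pi_gt_three
  linarith


/-- Proposition 1: given `a` and positive initial data `α₀, α₁, α₂, α₃`, one can
choose `b > a`, `A > 0`, `B > 0` such that the solution of `u'''' + Q₀ u = 0` on
`(a, ∞)` (with `Q₀ = A` on `[a,b)` and `Q₀ = -B` on `[b,∞)`) with these initial
data at `a` satisfies `u'(ζ) = u'''(ζ) = 0` at some `ζ ∈ (b, ∞)`. -/
theorem stmt_5 (a α₀ α₁ α₂ α₃ : ℝ)
    (h₀ : 0 < α₀) (h₁ : 0 < α₁) (h₂ : 0 < α₂) (h₃ : 0 < α₃) :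
    ∃ (b A B ζ : ℝ) (u : ℝ → ℝ),
      a < b ∧ 0 < A ∧ 0 < B ∧ b < ζ ∧
      -- u is three times continuously differentiable on [a, ∞)
      ContDiffOn ℝ 3 u (Ici a) ∧
      -- u is four times differentiable on (a, b) ∪ (b, ∞)
      (∀ x ∈ Ioo a b ∪ Ioi b,
        DifferentiableWithinAt ℝ (iteratedDerivWithin 3 u (Ici a)) (Ici a) x) ∧
      -- the differential equation on each side of b
      (∀ x ∈ Ioo a b, iteratedDerivWithin 4 u (Ici a) x = -A * u x) ∧
      (∀ x ∈ Ioi b, iteratedDerivWithin 4 u (Ici a) x = B * u x) ∧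
      -- initial conditions at a
      u a = α₀ ∧
      iteratedDerivWithin 1 u (Ici a) a = α₁ ∧
      iteratedDerivWithin 2 u (Ici a) a = α₂ ∧
      iteratedDerivWithin 3 u (Ici a) a = α₃ ∧
      -- the conclusion: u'(ζ) = u'''(ζ) = 0
      iteratedDerivWithin 1 u (Ici a) ζ = 0 ∧
      iteratedDerivWithin 3 u (Ici a) ζ = 0 := by
    -- scale parameter
  set l : ℝ := max 1 (512*(α₁+α₂+α₃)/α₀) with hldef
  have hl1 : 1 ≤ l := le_max_left _ _
  have hl0 : 0 < l := lt_of_lt_of_le one_pos hl1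
  have hlain : 512*(α₁+α₂+α₃)/α₀ ≤ l := le_max_right _ _
  have hδ : (α₁+α₂+α₃)/l ≤ α₀/512 := by
    rw [div_le_div_iff₀ hl0 (by norm_num)]
    have := (div_le_iff₀ h₀).1 hlain
    nlinarith
  set c : ℝ := α₀/2 + (α₁/l - α₃/(2*l^3))/4 with hcdef
  set d : ℝ := (α₁/l + α₃/(2*l^3))/4 + α₂/(2*l^2)/2 with hddef
  set c' : ℝ := α₀/2 - (α₁/l - α₃/(2*l^3))/4 with hc'def
  set d' : ℝ := (α₁/l + α₃/(2*l^3))/4 - α₂/(2*l^2)/2 with hd'def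
  have hl2 : l ≤ l^2 := by nlinarith
  have hl3 : l ≤ l^3 := by nlinarith
  have k1 : α₁/l ≤ (α₁+α₂+α₃)/l := by gcongr; linarith
  have k3 : α₃/(2*l^3) ≤ (α₁+α₂+α₃)/l := by
    rw [div_le_div_iff₀ (by positivity) hl0]
    nlinarith [mul_le_mul_of_nonneg_left hl3 h₃.le]
  have k2 : α₂/(2*l^2)/2 ≤ (α₁+α₂+α₃)/l := by
    rw [div_div, div_le_div_iff₀ (by positivity) hl0]
    nlinarith [mul_le_mul_of_nonneg_left hl2 h₂.le]
  have pos1 : 0 < α₁/l := by positivity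
  have pos3 : 0 < α₃/(2*l^3) := by positivity
  have pos2 : 0 < α₂/(2*l^2)/2 := by positivity
  have e1 : α₁/l ≤ α₀/512 := k1.trans hδ
  have e3 : α₃/(2*l^3) ≤ α₀/512 := k3.trans hδ
  have e2 : α₂/(2*l^2)/2 ≤ α₀/512 := k2.trans hδ
  have hcb1 : α₀/2 - α₀/256 ≤ c := by rw [hcdef]; linarith
  have hcb2 : c ≤ α₀/2 + α₀/256 := by rw [hcdef]; linarith
  have hdb1 : -(α₀/256) ≤ d := by rw [hddef]; linarith
  have hdb2 : d ≤ α₀/256 := by rw [hddef]; linarith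
  have hcb1' : α₀/2 - α₀/256 ≤ c' := by rw [hc'def]; linarith
  have hcb2' : c' ≤ α₀/2 + α₀/256 := by rw [hc'def]; linarith
  have hdb1' : -(α₀/256) ≤ d' := by rw [hd'def]; linarith
  have hdb2' : d' ≤ α₀/256 := by rw [hd'def]; linarith
  -- trig constants
  set T : ℝ := 3*Real.pi/8 + 2*Real.pi with hTdef
  have hπ0 := Real.pi_pos
  have hT0 : 0 < T := by rw [hTdef]; linarith
  set b : ℝ := a + T/l with hbdef
  have hab : a < b := by
    have : 0 < T/l := by positivity
    rw [hbdef]; linarith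
  have hlba : l*(b-a) = T := by
    rw [hbdef, show a + T/l - a = T/l by ring]
    field_simp
  set σ : ℝ := Real.cos (3*Real.pi/8) with hσdef
  set κ : ℝ := Real.sin (3*Real.pi/8) with hκdef
  have hcosT : Real.cos T = σ := by rw [hTdef, hσdef]; exact Real.cos_add_two_pi _
  have hsinT : Real.sin T = κ := by rw [hTdef, hκdef]; exact Real.sin_add_two_pi _
  obtain ⟨hσ1, hσ2, hκ1, hκub⟩ := sigma_kappa_bounds
  set E : ℝ := Real.exp T with hEdef
  have hE8 : 8 ≤ E := exp_T_bound
  -- left basis functions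
  set L0 : ℝ → ℝ := fun x => Fb a l l c d x + Fb a (-l) l c' d' x with hL0def
  set L1 : ℝ → ℝ := fun x => Fb a l l (l*(c+d)) (l*(d-c)) x
      + Fb a (-l) l (l*(d'-c')) (-(l*(c'+d'))) x with hL1def
  set L2 : ℝ → ℝ := fun x => Fb a l l (2*l^2*d) (-(2*l^2*c)) x
      + Fb a (-l) l (-(2*l^2*d')) (2*l^2*c') x with hL2def
  set L3 : ℝ → ℝ := fun x => Fb a l l (2*l^3*(d-c)) (-(2*l^3*(c+d))) x
      + Fb a (-l) l (2*l^3*(c'+d')) (2*l^3*(d'-c')) x with hL3def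
  set L4 : ℝ → ℝ := fun x => Fb a l l (-(4*l^4*c)) (-(4*l^4*d)) x
      + Fb a (-l) l (-(4*l^4*c')) (-(4*l^4*d')) x with hL4def
  have hL01 : ∀ x, HasDerivAt L0 (L1 x) x := fun x =>
    (Fb_hasDerivAt a l l c d (by ring) (by ring) x).add
      (Fb_hasDerivAt a (-l) l c' d' (by ring) (by ring) x)
  have hL12 : ∀ x, HasDerivAt L1 (L2 x) x := fun x =>
    (Fb_hasDerivAt a l l _ _ (by ring) (by ring) x).add
      (Fb_hasDerivAt a (-l) l _ _ (by ring) (by ring) x)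
  have hL23 : ∀ x, HasDerivAt L2 (L3 x) x := fun x =>
    (Fb_hasDerivAt a l l _ _ (by ring) (by ring) x).add
      (Fb_hasDerivAt a (-l) l _ _ (by ring) (by ring) x)
  have hL34 : ∀ x, HasDerivAt L3 (L4 x) x := fun x =>
    (Fb_hasDerivAt a l l _ _ (by ring) (by ring) x).add
      (Fb_hasDerivAt a (-l) l _ _ (by ring) (by ring) x)
  have hL4eq : ∀ x, L4 x = -(4*l^4) * L0 x := by
    intro x; simp only [hL4def, hL0def, Fb]; ring
  -- initial values
  have hL0a : L0 a = α₀ := by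
    simp only [hL0def, Fb_self, hcdef, hc'def]; ring
  have hL1a : L1 a = α₁ := by
    simp only [hL1def, Fb_self, hcdef, hc'def, hddef, hd'def]
    field_simp
    ring
  have hL2a : L2 a = α₂ := by
    simp only [hL2def, Fb_self, hcdef, hc'def, hddef, hd'def]
    field_simp
    ring
  have hL3a : L3 a = α₃ := by
    simp only [hL3def, Fb_self, hcdef, hc'def, hddef, hd'def]
    field_simp
    ring
  -- values at b
  have hFbgrow : ∀ A B : ℝ, Fb a l l A B b = E*(A*σ + B*κ) := by
    intro A B
    simp only [Fb]
    rw [hlba, hcosT, hsinT, hEdef]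
  have hFbdec : ∀ A B : ℝ, Fb a (-l) l A B b = E⁻¹*(A*σ + B*κ) := by
    intro A B
    simp only [Fb]
    rw [show -l*(b-a) = -T by rw [← hlba]; ring, hlba, hcosT, hsinT, Real.exp_neg, hEdef]
  obtain ⟨s0, s1, s2, s3⟩ := signs h₀ hcb1 hcb2 hdb1 hdb2 hcb1' hcb2' hdb1' hdb2'
    hσ1 hσ2 hκ1 hκub hE8
  have hp : 0 < L0 b := by
    have : L0 b = E*(c*σ + d*κ) + E⁻¹*(c'*σ + d'*κ) := by
      simp only [hL0def]; rw [hFbgrow, hFbdec]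
    rw [this]; exact s0
  have hq : L1 b < 0 := by
    have : L1 b = l * (E*((c+d)*σ + (d-c)*κ) + E⁻¹*((d'-c')*σ - (c'+d')*κ)) := by
      simp only [hL1def]; rw [hFbgrow, hFbdec]; ring
    rw [this]; exact mul_neg_of_pos_of_neg hl0 s1
  have hr : L2 b < 0 := by
    have : L2 b = l^2 * (E*(2*d*σ - 2*c*κ) + E⁻¹*(-(2*d')*σ + 2*c'*κ)) := by
      simp only [hL2def]; rw [hFbgrow, hFbdec]; ring
    rw [this]; exact mul_neg_of_pos_of_neg (by positivity) s2
  have hs : L3 b < 0 := by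
    have : L3 b = l^3 * (E*(2*(d-c)*σ - 2*(c+d)*κ) + E⁻¹*(2*(c'+d')*σ + 2*(d'-c')*κ)) := by
      simp only [hL3def]; rw [hFbgrow, hFbdec]; ring
    rw [this]; exact mul_neg_of_pos_of_neg (by positivity) s3
  -- stage 2
  obtain ⟨μ, θ, hμ0, hθ0, Hid, Tid⟩ := stage2 hp hq hr hs
  set p : ℝ := L0 b with hpdef
  set q : ℝ := L1 b with hqdef
  set r : ℝ := L2 b with hrdef
  set s : ℝ := L3 b with hsdef
  set c1 : ℝ := (p + r/μ^2)/2 with hc1def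
  set c2 : ℝ := (q*μ^2+s)/(2*μ^3) with hc2def
  set c3 : ℝ := (p - r/μ^2)/2 with hc3def
  set c4 : ℝ := (q*μ^2-s)/(2*μ^3) with hc4def
  -- right basis functions
  set R0 : ℝ → ℝ := fun x => Gb b μ c1 c2 c3 c4 x with hR0def
  set R1 : ℝ → ℝ := fun x => Gb b μ (μ*c2) (μ*c1) (μ*c4) (-(μ*c3)) x with hR1def
  set R2 : ℝ → ℝ := fun x => Gb b μ (μ^2*c1) (μ^2*c2) (-(μ^2*c3)) (-(μ^2*c4)) x with hR2def
  set R3 : ℝ → ℝ := fun x => Gb b μ (μ^3*c2) (μ^3*c1) (-(μ^3*c4)) (μ^3*c3) x with hR3def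
  set R4 : ℝ → ℝ := fun x => Gb b μ (μ^4*c1) (μ^4*c2) (μ^4*c3) (μ^4*c4) x with hR4def
  have hR01 : ∀ x, HasDerivAt R0 (R1 x) x := fun x =>
    Gb_hasDerivAt b μ _ _ _ _ (by ring) (by ring) (by ring) (by ring) x
  have hR12 : ∀ x, HasDerivAt R1 (R2 x) x := fun x =>
    Gb_hasDerivAt b μ _ _ _ _ (by ring) (by ring) (by ring) (by ring) x
  have hR23 : ∀ x, HasDerivAt R2 (R3 x) x := fun x =>
    Gb_hasDerivAt b μ _ _ _ _ (by ring) (by ring) (by ring) (by ring) x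
  have hR34 : ∀ x, HasDerivAt R3 (R4 x) x := fun x =>
    Gb_hasDerivAt b μ _ _ _ _ (by ring) (by ring) (by ring) (by ring) x
  have hR4eq : ∀ x, R4 x = μ^4 * R0 x := by
    intro x; simp only [hR4def, hR0def, Gb]; ring
  have hμne : μ ≠ 0 := hμ0.ne'
  -- matching at b
  have hm0 : L0 b = R0 b := by
    rw [hR0def]
    show p = Gb b μ c1 c2 c3 c4 b
    rw [Gb_self, hc1def, hc3def]; ring
  have hm1 : L1 b = R1 b := by
    rw [hR1def]
    show q = Gb b μ (μ*c2) (μ*c1) (μ*c4) (-(μ*c3)) b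
    rw [Gb_self, hc2def, hc4def]
    field_simp
    ring
  have hm2 : L2 b = R2 b := by
    rw [hR2def]
    show r = Gb b μ (μ^2*c1) (μ^2*c2) (-(μ^2*c3)) (-(μ^2*c4)) b
    rw [Gb_self, hc1def, hc3def]
    field_simp
    ring
  have hm3 : L3 b = R3 b := by
    rw [hR3def]
    show s = Gb b μ (μ^3*c2) (μ^3*c1) (-(μ^3*c4)) (μ^3*c3) b
    rw [Gb_self, hc2def, hc4def]
    field_simp
    ring
  -- the special point ζ
  set ζ : ℝ := b + θ/μ with hζdef
  have hbζ : b < ζ := by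
    have : 0 < θ/μ := by positivity
    rw [hζdef]; linarith
  have hμζ : μ*(ζ-b) = θ := by
    rw [hζdef, show b + θ/μ - b = θ/μ by ring]
    field_simp
  have hR1ζ : R1 ζ = 0 := by
    simp only [hR1def, Gb]
    rw [hμζ]
    linear_combination μ * Hid - μ * Tid
  have hR3ζ : R3 ζ = 0 := by
    simp only [hR3def, Gb]
    rw [hμζ]
    linear_combination μ^3 * Hid + μ^3 * Tid
  -- glued function and its derivatives
  set u : ℝ → ℝ := fun y => if b ≤ y then R0 y else L0 y with hudef
  set v1 : ℝ → ℝ := fun y => if b ≤ y then R1 y else L1 y with hv1def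
  set v2 : ℝ → ℝ := fun y => if b ≤ y then R2 y else L2 y with hv2def
  set v3 : ℝ → ℝ := fun y => if b ≤ y then R3 y else L3 y with hv3def
  have hu1 : ∀ x, HasDerivAt u (v1 x) x := fun x => piecewise_hasDerivAt hL01 hR01 hm0 hm1 x
  have hv12 : ∀ x, HasDerivAt v1 (v2 x) x := fun x => piecewise_hasDerivAt hL12 hR12 hm1 hm2 x
  have hv23 : ∀ x, HasDerivAt v2 (v3 x) x := fun x => piecewise_hasDerivAt hL23 hR23 hm2 hm3 x
  -- values of u and v's off the junction
  have huL : ∀ x, x < b → u x = L0 x := fun x hx => if_neg (not_le.2 hx)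
  have huR : ∀ x, b ≤ x → u x = R0 x := fun x hx => if_pos hx
  have hv1L : ∀ x, x < b → v1 x = L1 x := fun x hx => if_neg (not_le.2 hx)
  have hv1R : ∀ x, b ≤ x → v1 x = R1 x := fun x hx => if_pos hx
  have hv2L : ∀ x, x < b → v2 x = L2 x := fun x hx => if_neg (not_le.2 hx)
  have hv3L : ∀ x, x < b → v3 x = L3 x := fun x hx => if_neg (not_le.2 hx)
  have hv3R : ∀ x, b ≤ x → v3 x = R3 x := fun x hx => if_pos hx
  -- derivative of v3 away from the junction
  have hv3dL : ∀ x, x < b → HasDerivAt v3 (L4 x) x := by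
    intro x hx
    apply (hL34 x).congr_of_eventuallyEq
    filter_upwards [Iio_mem_nhds hx] with y hy
    exact hv3L y hy
  have hv3dR : ∀ x, b < x → HasDerivAt v3 (R4 x) x := by
    intro x hx
    apply (hR34 x).congr_of_eventuallyEq
    filter_upwards [Ioi_mem_nhds hx] with y hy
    exact hv3R y hy.le
  -- global C³ smoothness
  have hderiv_u : deriv u = v1 := funext fun x => (hu1 x).deriv
  have hderiv_v1 : deriv v1 = v2 := funext fun x => (hv12 x).deriv
  have hderiv_v2 : deriv v2 = v3 := funext fun x => (hv23 x).deriv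
  have hR3cont : Continuous R3 := Gb_cont b μ _ _ _ _
  have hL3cont : Continuous L3 := (Fb_cont a l l _ _).add (Fb_cont a (-l) l _ _)
  have hv3cont : Continuous v3 := by
    rw [hv3def]
    exact Continuous.if_le hR3cont hL3cont continuous_const continuous_id
      (fun x hx => by rw [← hx]; exact hm3.symm)
  have hC3 : ContDiff ℝ 3 u := by
    rw [show (3 : WithTop ℕ∞) = 2 + 1 from rfl, contDiff_succ_iff_deriv]
    refine ⟨fun x => (hu1 x).differentiableAt, by simp, ?_⟩
    rw [hderiv_u, show (2 : WithTop ℕ∞) = 1 + 1 from rfl, contDiff_succ_iff_deriv]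
    refine ⟨fun x => (hv12 x).differentiableAt, by simp, ?_⟩
    rw [hderiv_v1, show (1 : WithTop ℕ∞) = 0 + 1 from rfl, contDiff_succ_iff_deriv]
    refine ⟨fun x => (hv23 x).differentiableAt, by simp, ?_⟩
    rw [hderiv_v2, contDiff_zero]
    exact hv3cont
  -- iterated derivatives within Ici a
  have hUD := uniqueDiffOn_Ici a
  have h1 : ∀ y ∈ Ici a, iteratedDerivWithin 1 u (Ici a) y = v1 y := by
    intro y hy
    rw [iteratedDerivWithin_one]
    exact ((hu1 y).hasDerivWithinAt).derivWithin (hUD y hy)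
  have h2 : ∀ y ∈ Ici a, iteratedDerivWithin 2 u (Ici a) y = v2 y := by
    intro y hy
    rw [show (2:ℕ) = 1+1 from rfl, iteratedDerivWithin_succ,
      derivWithin_congr h1 (h1 y hy)]
    exact ((hv12 y).hasDerivWithinAt).derivWithin (hUD y hy)
  have h3 : ∀ y ∈ Ici a, iteratedDerivWithin 3 u (Ici a) y = v3 y := by
    intro y hy
    rw [show (3:ℕ) = 2+1 from rfl, iteratedDerivWithin_succ,
      derivWithin_congr h2 (h2 y hy)]
    exact ((hv23 y).hasDerivWithinAt).derivWithin (hUD y hy)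
  have haI : a ∈ Ici a := self_mem_Ici
  have hζI : ζ ∈ Ici a := le_of_lt (lt_trans hab hbζ)
  refine ⟨b, 4*l^4, μ^4, ζ, u, hab, by positivity, by positivity, hbζ, ?_, ?_, ?_, ?_,
    ?_, ?_, ?_, ?_, ?_, ?_⟩
  · exact hC3.contDiffOn
  · -- differentiability of the third derivative off the junction
    intro x hx
    have hxI : x ∈ Ici a := by
      rcases hx with hx | hx
      · exact le_of_lt hx.1
      · exact le_of_lt (lt_trans hab hx)
    have hd : DifferentiableAt ℝ v3 x := by
      rcases hx with hx | hx
      · exact (hv3dL x hx.2).differentiableAt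
      · exact (hv3dR x hx).differentiableAt
    exact hd.differentiableWithinAt.congr (fun y hy => h3 y hy) (h3 x hxI)
  · -- equation on (a, b)
    intro x hx
    have hxI : x ∈ Ici a := le_of_lt hx.1
    rw [show (4:ℕ) = 3+1 from rfl, iteratedDerivWithin_succ,
      derivWithin_congr h3 (h3 x hxI),
      ((hv3dL x hx.2).hasDerivWithinAt).derivWithin (hUD x hxI),
      hL4eq x, huL x hx.2]
  · -- equation on (b, ∞)
    intro x hx
    have hxI : x ∈ Ici a := le_of_lt (lt_trans hab hx)
    rw [show (4:ℕ) = 3+1 from rfl, iteratedDerivWithin_succ,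
      derivWithin_congr h3 (h3 x hxI),
      ((hv3dR x hx).hasDerivWithinAt).derivWithin (hUD x hxI),
      hR4eq x, huR x (le_of_lt hx)]
  · rw [huL a hab, hL0a]
  · rw [h1 a haI, hv1L a hab, hL1a]
  · rw [h2 a haI, hv2L a hab, hL2a]
  · rw [h3 a haI, hv3L a hab, hL3a]
  · rw [h1 ζ hζI, hv1R ζ (le_of_lt hbζ), hR1ζ]
  · rw [h3 ζ hζI, hv3R ζ (le_of_lt hbζ), hR3ζ]
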